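/- For every ε > 0, the matrix (ε/0.1)·A₃, where A₃ is the 3×3 matrix with rows (9.0817, 1.1024, 1.1024), (1.1024, 0.23359, 0.10237), (1.1024, 0.10237, 0.14398), is positive definite, but its soft-thresholded version at level ε (applying x ↦ sgn(x)(|x|−ε)₊ to off-diagonal entries only) is not positive definite. -/

import Mathlib

/-- Soft-thresholding at level `ε` applied to off-diagonal entries. -/
noncomputable def softThreshold {n : ℕ} (ε : ℝ) (A : Matrix (Fin n) (Fin n) ℝ) :
    Matrix (Fin n) (Fin n) ℝ :=
  Matrix.of fun i j =>
    if i = j then A i i else Real.sign (A i j) * max (|A i j| - ε) 0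

/-- The matrix `A₃` from the paper. -/
noncomputable def A₃ : Matrix (Fin 3) (Fin 3) ℝ :=
  Matrix.of ![![9.0817, 1.1024, 1.1024],
              ![1.1024, 0.23359, 0.10237],
              ![1.1024, 0.10237, 0.14398]]

lemma A3_posdef : A₃.PosDef := by
  rw [Matrix.posDef_iff_dotProduct_mulVec]
  constructor
  · ext i j
    fin_cases i <;> fin_cases j <;> norm_num [A₃, Matrix.conjTranspose_apply]
  · intro x hx
    obtain ⟨i, hi⟩ := Function.ne_iff.mp hx
    simp only [Pi.zero_apply] at hi
    have hq : dotProduct (star x) (A₃.mulVec x) =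
        9.0817 * x 0 * x 0 + 0.23359 * x 1 * x 1 + 0.14398 * x 2 * x 2
        + 2 * 1.1024 * x 0 * x 1 + 2 * 1.1024 * x 0 * x 2 + 2 * 0.10237 * x 1 * x 2 := by
      simp [A₃, Matrix.mulVec, dotProduct, Fin.sum_univ_three, Matrix.vecHead, Matrix.vecTail]
      ring
    rw [hq]
    fin_cases i <;>
    · simp at hi
      nlinarith [sq_nonneg (x 0 + 0.1214 * (x 1 + x 2)), sq_nonneg (x 1 - 0.3152 * x 2),
        sq_nonneg (x 2), mul_self_pos.mpr hi, sq_nonneg (x 0), sq_nonneg (x 1)]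

lemma sign_smul_pos {α a : ℝ} (hα : 0 < α) : Real.sign (α * a) = Real.sign a := by
  rcases lt_trichotomy a 0 with h | h | h
  · rw [Real.sign_of_neg h, Real.sign_of_neg (mul_neg_of_pos_of_neg hα h)]
  · simp [h]
  · rw [Real.sign_of_pos h, Real.sign_of_pos (mul_pos hα h)]

lemma soft_scale {n : ℕ} (ε : ℝ) (hε : 0 < ε) (A : Matrix (Fin n) (Fin n) ℝ) :
    softThreshold ε ((ε / 0.1) • A) = (ε / 0.1) • softThreshold 0.1 A := by
  have hα : (0:ℝ) < ε / 0.1 := by positivity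
  ext i j
  simp only [softThreshold, Matrix.of_apply, Matrix.smul_apply, smul_eq_mul]
  by_cases h : i = j
  · simp [h]
  · simp only [h, if_false]
    rw [sign_smul_pos hα, abs_mul, abs_of_pos hα]
    have h3 : (ε/0.1) * ((|A i j| - 0.1) ⊔ 0) = (ε/0.1 * |A i j| - ε) ⊔ 0 := by
      rw [mul_max_of_nonneg _ _ hα.le, mul_zero, mul_sub]
      congr 2
      rw [div_mul_cancel₀]
      norm_num
    rw [← h3]; ring

lemma posdef_smul {n : ℕ} {A : Matrix (Fin n) (Fin n) ℝ} (hA : A.PosDef) {α : ℝ}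
    (hα : 0 < α) : (α • A).PosDef := by
  rw [Matrix.posDef_iff_dotProduct_mulVec]
  constructor
  · have h := hA.1
    simp only [Matrix.IsHermitian, Matrix.conjTranspose_smul, star_trivial] at *
    rw [h]
  · intro x hx
    rw [Matrix.smul_mulVec, dotProduct_smul, smul_eq_mul]
    exact mul_pos hα ((Matrix.posDef_iff_dotProduct_mulVec.mp hA).2 hx)

lemma detB_neg : (softThreshold 0.1 A₃).det < 0 := by
  rw [Matrix.det_fin_three]
  norm_num [softThreshold, A₃, Matrix.vecHead, Matrix.vecTail, Real.sign_of_pos,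
    abs_of_pos, Fin.ext_iff, Matrix.cons_val_two, Matrix.cons_val_one, Matrix.cons_val_zero]

theorem stmt_6 (ε : ℝ) (hε : 0 < ε) :
    ((ε / 0.1) • A₃).PosDef ∧ ¬ (softThreshold ε ((ε / 0.1) • A₃)).PosDef := by
  have hα : (0:ℝ) < ε / 0.1 := by positivity
  refine ⟨posdef_smul A3_posdef hα, ?_⟩
  rw [soft_scale ε hε]
  intro hP
  have hdet := hP.det_pos
  rw [Matrix.det_smul] at hdet
  simp only [Fintype.card_fin, smul_eq_mul] at hdet
  nlinarith [pow_pos hα 3, detB_neg]
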